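/- (Log loss to inverse loss convexity) Let ι and K be finite types, g : ι → K a grouping of the indices, and f : ι → (Fin m → ℝ) → ℝ a family of functions such that f i x > 0 for every i ∈ ι and every x ∈ ℝ^m, and such that for every i the function x ↦ −log(f i x) is convex on ℝ^m. Then the function L(x) = Σ_{k ∈ K} ( ∏_{i : g i = k} f i x )⁻¹ is convex on ℝ^m. -/

import Mathlib

open Finset

lemma convexOn_finsum {E α : Type*} [AddCommGroup E] [Module ℝ E]
    (s : Finset α) (F : α → E → ℝ)
    (h : ∀ a ∈ s, ConvexOn ℝ Set.univ (F a)) :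
    ConvexOn ℝ Set.univ (fun x => ∑ a ∈ s, F a x) := by
  classical
  induction s using Finset.induction with
  | empty => simpa using convexOn_const 0 convex_univ
  | insert _ _ hnot ih =>
    simp only [Finset.sum_insert hnot]
    exact (h _ (Finset.mem_insert_self _ _)).add
      (ih fun a ha => h a (Finset.mem_insert_of_mem ha))

/-- (Log loss to inverse loss convexity) If each `fᵢ` is positive and has
convex log loss `x ↦ −log(fᵢ x)`, then
`L(x) = Σ_k (∏_{i : g i = k} fᵢ x)⁻¹` is convex. -/
theorem logloss_to_inverseloss_convexity {m : ℕ} {ι K : Type*}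
    [Fintype ι] [Fintype K] [DecidableEq K]
    (g : ι → K) (f : ι → (Fin m → ℝ) → ℝ)
    (hpos : ∀ i (x : Fin m → ℝ), 0 < f i x)
    (hconv : ∀ i, ConvexOn ℝ Set.univ (fun x : Fin m → ℝ => -Real.log (f i x))) :
    ConvexOn ℝ Set.univ (fun x : Fin m → ℝ =>
      ∑ k : K, (∏ i ∈ Finset.univ.filter (fun i => g i = k), f i x)⁻¹) := by
  apply convexOn_finsum
  intro k _
  set F : (Fin m → ℝ) → ℝ :=
    (fun x => ∑ i ∈ Finset.univ.filter (fun i => g i = k), (-Real.log (f i x))) with hF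
  have hrw : (fun x : Fin m → ℝ =>
      (∏ i ∈ Finset.univ.filter (fun i => g i = k), f i x)⁻¹)
      = fun x => Real.exp (F x) := by
    funext x
    have h1 : F x = -∑ i ∈ Finset.univ.filter (fun i => g i = k), Real.log (f i x) := by
      simp [hF]
    rw [h1, Real.exp_neg, Real.exp_sum]
    congr 1
    exact Finset.prod_congr rfl fun i _ => (Real.exp_log (hpos i x)).symm
  rw [hrw]
  have hinner : ConvexOn ℝ Set.univ F :=
    convexOn_finsum _ _ fun i _ => hconv i
  refine ⟨convex_univ, fun x _ y _ a b ha hb hab => ?_⟩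
  have h1 : F (a • x + b • y) ≤ a * F x + b * F y := by
    simpa [smul_eq_mul] using hinner.2 (Set.mem_univ x) (Set.mem_univ y) ha hb hab
  calc Real.exp (F (a • x + b • y)) ≤ Real.exp (a * F x + b * F y) :=
        Real.exp_le_exp.mpr h1
    _ ≤ a * Real.exp (F x) + b * Real.exp (F y) := by
        simpa [smul_eq_mul] using
          convexOn_exp.2 (Set.mem_univ (F x)) (Set.mem_univ (F y)) ha hb hab
    _ = a • Real.exp (F x) + b • Real.exp (F y) := by simp [smul_eq_mul]
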